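/- Let U ⊆ ℂ be open, g : U → ℂ holomorphic with g'(z) ≠ 0 for all z ∈ U, and h : U → ℝ continuously differentiable. Set T = 1+|g|², L = 4|g'|²/T², Y = (2g/T, (2−T)/T) : U → ℂ × ℝ ≅ ℝ³, and define η = (h_{,1} Y_{,1} + h_{,2} Y_{,2})/L + hY (that is, η = ∇_L h + hY, where ∇_L h is the gradient of h with respect to the metric L δ_{ij} pushed into ℝ³). Then η equals the explicit expression η = ( (T/2)(∇h/|g'|²) g' − g ⟨∇h, g/g'⟩ + (2h/T) g , ((2−T)/T) h − ⟨∇h, g/g'⟩ ), where ∇h denotes the complex number h_{,1} + i h_{,2}, the products (∇h)g' and so on are complex multiplications, and ⟨w₁,w₂⟩ = Re(w̄₁ w₂). -/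

import Mathlib

open Complex

noncomputable section

/-- Euclidean inner product on ℂ ≅ ℝ²: ⟨w₁,w₂⟩ = Re(w̄₁ w₂). -/
def inn (w₁ w₂ : ℂ) : ℝ := ((starRingEnd ℂ) w₁ * w₂).re

/-- Partial derivative in u (z = u + iv). -/
def pd1 (f : ℂ → ℝ) (z : ℂ) : ℝ := fderiv ℝ f z 1
/-- Partial derivative in v (z = u + iv). -/
def pd2 (f : ℂ → ℝ) (z : ℂ) : ℝ := fderiv ℝ f z Complex.I
/-- Euclidean Laplacian Δf = f_{,11} + f_{,22}. -/
def lap (f : ℂ → ℝ) (z : ℂ) : ℝ := pd1 (pd1 f) z + pd2 (pd2 f) z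

/-- Partial derivative in u of an ℝ³ ≅ ℂ × ℝ valued map. -/
def pdv1 (f : ℂ → ℂ × ℝ) (z : ℂ) : ℂ × ℝ := fderiv ℝ f z 1
/-- Partial derivative in v of an ℝ³ ≅ ℂ × ℝ valued map. -/
def pdv2 (f : ℂ → ℂ × ℝ) (z : ℂ) : ℂ × ℝ := fderiv ℝ f z Complex.I
/-- Euclidean inner product on ℝ³ ≅ ℂ × ℝ. -/
def inn3 (p q : ℂ × ℝ) : ℝ := inn p.1 q.1 + p.2 * q.2

set_option maxHeartbeats 1600000 in
/-- explicit formula for η = ∇_L h + hY (equation (eta WR) of the paper). -/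
theorem stmt_6 (U : Set ℂ) (hU : IsOpen U)
    (g g' : ℂ → ℂ) (hg : ∀ z ∈ U, HasDerivAt g (g' z) z) (hg' : ∀ z ∈ U, g' z ≠ 0)
    (h : ℂ → ℝ) (hh : ContDiffOn ℝ 1 h U) :
    let T : ℂ → ℝ := fun w => 1 + ‖g w‖ ^ 2
    let L : ℂ → ℝ := fun w => 4 * ‖g' w‖ ^ 2 / (T w) ^ 2
    let Y : ℂ → ℂ × ℝ := fun w => (2 * g w / ((T w : ℝ) : ℂ), (2 - T w) / T w)
    let η : ℂ → ℂ × ℝ := fun w =>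
      (pd1 h w / L w) • pdv1 Y w + (pd2 h w / L w) • pdv2 Y w + h w • Y w
    let gradh : ℂ → ℂ := fun w => (pd1 h w : ℂ) + (pd2 h w : ℂ) * Complex.I
    ∀ z ∈ U,
      η z = (((T z / 2 : ℝ) : ℂ) * (gradh z / ((‖g' z‖ ^ 2 : ℝ) : ℂ)) * g' z
               - g z * ((inn (gradh z) (g z / g' z) : ℝ) : ℂ)
               + ((2 * h z / T z : ℝ) : ℂ) * g z,
             ((2 - T z) / T z) * h z - inn (gradh z) (g z / g' z)) := by
  intro T L Y η gradh z hz
  have hb : g' z ≠ 0 := hg' z hz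
  have hgF : HasFDerivAt g (((1 : ℂ →L[ℂ] ℂ).smulRight (g' z)).restrictScalars ℝ) z :=
    (hg z hz).hasFDerivAt.restrictScalars ℝ
  set Dg := ((1 : ℂ →L[ℂ] ℂ).smulRight (g' z)).restrictScalars ℝ with hDg
  have hre : HasFDerivAt (fun w => (g w).re) (Complex.reCLM.comp Dg) z :=
    (Complex.reCLM.hasFDerivAt (x := g z)).comp z hgF
  have him : HasFDerivAt (fun w => (g w).im) (Complex.imCLM.comp Dg) z :=
    (Complex.imCLM.hasFDerivAt (x := g z)).comp z hgF
  set DT := ((g z).re • (Complex.reCLM.comp Dg) + (g z).re • (Complex.reCLM.comp Dg)) +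
       ((g z).im • (Complex.imCLM.comp Dg) + (g z).im • (Complex.imCLM.comp Dg)) with hDT
  have hT : HasFDerivAt (fun w => 1 + ‖g w‖ ^ 2) DT z := by
    have e : (fun w => 1 + ‖g w‖ ^ 2)
        = fun w => 1 + ((g w).re * (g w).re + (g w).im * (g w).im) := by
      funext w; rw [Complex.sq_norm, Complex.normSq_apply]
    rw [e]
    exact ((hre.mul hre).add (him.mul him)).const_add 1
  have ht0 : (0:ℝ) < 1 + ‖g z‖ ^ 2 := by positivity
  have htne : (1 + ‖g z‖ ^ 2 : ℝ) ≠ 0 := ne_of_gt ht0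
  have htneC : ((1 + ‖g z‖ ^ 2 : ℝ) : ℂ) ≠ 0 := by exact_mod_cast htne
  have hTC : HasFDerivAt (fun w => (((1 + ‖g w‖ ^ 2 : ℝ)) : ℂ))
      (Complex.ofRealCLM.comp DT) z := Complex.ofRealCLM.hasFDerivAt.comp z hT
  have hinvC : HasFDerivAt (fun w => ((((1 + ‖g w‖ ^ 2 : ℝ)) : ℂ))⁻¹)
      ((((1 : ℂ →L[ℂ] ℂ).smulRight
          (-(((1 + ‖g z‖ ^ 2 : ℝ) : ℂ) ^ 2)⁻¹)).restrictScalars ℝ).comp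
        (Complex.ofRealCLM.comp DT)) z :=
    ((hasFDerivAt_inv htneC).restrictScalars ℝ).comp z hTC
  have hinvR : HasFDerivAt (fun w => (1 + ‖g w‖ ^ 2)⁻¹)
      (((1 : ℝ →L[ℝ] ℝ).smulRight (-((1 + ‖g z‖ ^ 2) ^ 2)⁻¹)).comp DT) z :=
    (hasFDerivAt_inv htne).comp z hT
  have hY1 := (hgF.const_mul (2:ℂ)).mul hinvC
  have hY2 := (hT.const_sub (2:ℝ)).mul hinvR
  have hYeq : Y = fun w => (2 * g w * ((((1 + ‖g w‖ ^ 2 : ℝ)) : ℂ))⁻¹,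
      (2 - (1 + ‖g w‖ ^ 2)) * (1 + ‖g w‖ ^ 2)⁻¹) := by
    funext w; simp [Y, T, div_eq_mul_inv]
  have hYd : HasFDerivAt (fun w => (2 * g w * ((((1 + ‖g w‖ ^ 2 : ℝ)) : ℂ))⁻¹,
      (2 - (1 + ‖g w‖ ^ 2)) * (1 + ‖g w‖ ^ 2)⁻¹)) _ z := hY1.prodMk hY2
  simp only [η, pdv1, pdv2]
  rw [hYeq, hYd.fderiv]
  simp only [hDg, hDT, ContinuousLinearMap.prod_apply, ContinuousLinearMap.add_apply,
    ContinuousLinearMap.smul_apply, ContinuousLinearMap.comp_apply,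
    ContinuousLinearMap.coe_restrictScalars', ContinuousLinearMap.smulRight_apply,
    ContinuousLinearMap.one_apply, Complex.reCLM_apply, Complex.imCLM_apply,
    Complex.ofRealCLM_apply, ContinuousLinearMap.neg_apply, smul_eq_mul,
    Complex.ofReal_one, one_mul, mul_one, Complex.one_re, Complex.one_im,
    Complex.I_re, Complex.I_im]
  have hnb : (g' z).re * (g' z).re + (g' z).im * (g' z).im ≠ 0 := by
    intro hc
    apply hb
    rw [← Complex.normSq_apply] at hc
    exact Complex.normSq_eq_zero.mp hc
  have htne' : 1 + ((g z).re * (g z).re + (g z).im * (g z).im) ≠ 0 := by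
    rw [← Complex.normSq_apply, ← Complex.sq_norm]; exact htne
  clear hY1 hY2 hYd hinvC hinvR hTC hT hre him hgF hYeq hb htne htneC ht0 hz hg hg' hh hU
  simp only [T, L, gradh, inn, η]
  clear η Y gradh L T
  rw [Prod.ext_iff]
  constructor
  · simp only [Prod.fst_add, Prod.smul_fst]
    simp only [Complex.sq_norm, Complex.normSq_apply]
    simp only [Complex.real_smul, Complex.ext_iff,
      Complex.add_re, Complex.add_im, Complex.mul_re, Complex.mul_im, Complex.sub_re,
      Complex.sub_im, Complex.neg_re, Complex.neg_im, Complex.inv_re, Complex.inv_im,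
      Complex.div_re, Complex.div_im, Complex.ofReal_re, Complex.ofReal_im,
      Complex.I_re, Complex.I_im, Complex.normSq_apply,
      pow_two, Complex.conj_re, Complex.conj_im, Complex.re_ofNat, Complex.im_ofNat]
    simp only [mul_zero, zero_mul, sub_zero, add_zero, zero_add, neg_zero, zero_div, neg_neg]
    constructor
    · field_simp
      ring
    · field_simp
      ring
  · simp only [Prod.snd_add, Prod.smul_snd]
    simp only [Complex.sq_norm, Complex.normSq_apply]
    simp only [smul_eq_mul, Complex.mul_re,
      Complex.add_re, Complex.add_im, Complex.mul_im, Complex.div_re, Complex.div_im,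
      Complex.ofReal_re, Complex.ofReal_im, Complex.I_re, Complex.I_im,
      Complex.normSq_apply, pow_two, Complex.conj_re, Complex.conj_im]
    field_simp
    ring
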